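/- For every player p and every S-admissible strategy σ ∈ Γ_p, there exists a Dirac strategy σ' ∈ Γ_p (i.e., σ'(h) is a Dirac move for every history h) such that σ ≈^S σ'. -/

import Mathlib

open scoped Classical

noncomputable section

/-- Run of a deterministic automaton along an infinite word. -/
def autRun {α Q : Type} (q0 : Q) (d : Q → α → Q) (ρ : ℕ → α) : ℕ → Q
  | 0 => q0
  | k + 1 => d (autRun q0 d ρ k) (ρ k)

/-- A concurrent game played on a finite graph. -/
structure ConcGame where
  S : Type
  A : Type
  P : Type
  [fS : Fintype S]
  [fA : Fintype A]
  [fP : Fintype P]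
  [dS : DecidableEq S]
  [dA : DecidableEq A]
  [dP : DecidableEq P]
  init : S
  act : P → S → Set A
  act_nonempty : ∀ p s, (act p s).Nonempty
  tr : S → (P → A) → S

open MeasureTheory

namespace ConcGame

attribute [instance] ConcGame.fS ConcGame.fA ConcGame.fP ConcGame.dS ConcGame.dA ConcGame.dP

inductive Sem where
  | Sure : Sem
  | Almost : Sem

variable (G : ConcGame)

instance : MeasurableSpace G.S := ⊤

/-- Randomised move of player `p` at state `s`: a probability distribution on `act p s`. -/
def Mixed (p : G.P) (s : G.S) : Type :=
  { f : G.A → ℝ // (∀ a, 0 ≤ f a) ∧ (∑ a, f a) = 1 ∧ ∀ a, f a ≠ 0 → a ∈ G.act p s }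

/-- Support of a randomised move. -/
def Supp {p : G.P} {s : G.S} (α : G.Mixed p s) : Set G.A := { a | α.1 a ≠ 0 }

/-- A randomised move is Dirac if it puts all mass on one action. -/
def IsDirac {p : G.P} {s : G.S} (α : G.Mixed p s) : Prop := ∃ a, α.1 a = 1

/-- The Dirac move on action `a`. -/
def dirac (p : G.P) (s : G.S) (a : G.A) (ha : a ∈ G.act p s) : G.Mixed p s :=
  ⟨fun b => if b = a then 1 else 0, by
    refine ⟨fun b => ?_, ?_, fun b hb => ?_⟩
    · by_cases h : b = a <;> simp [h]
    · simp
    · by_cases h : b = a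
      · subst h; exact ha
      · simp [h] at hb⟩

/-- The last state of a history (the initial state for the empty list). -/
def lastS (l : List G.S) : G.S := l.getLast?.getD G.init

/-- One step of the game graph. -/
def Step (s s' : G.S) : Prop :=
  ∃ m : G.P → G.A, (∀ p, m p ∈ G.act p s) ∧ G.tr s m = s'

/-- Histories: finite paths starting at the initial state. -/
def IsHistory (l : List G.S) : Prop := l.head? = some G.init ∧ l.Chain' G.Step

/-- Runs: infinite sequences of states. -/
abbrev Run : Type := ℕ → G.S

/-- A strategy of player `p`: maps each history to a randomised move at its last state. -/
def Strategy (p : G.P) : Type := (l : List G.S) → G.Mixed p (G.lastS l)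

/-- A profile of strategies, one per player. -/
def Profile : Type := ∀ p : G.P, G.Strategy p

/-- A strategy for the coalition `-p` of all players other than `p`. -/
def CoStrategy (p : G.P) : Type := ∀ q : G.P, q ≠ p → G.Strategy q

/-- Combining a strategy of `p` with a coalition strategy of `-p` into a profile. -/
def combine {p : G.P} (σ : G.Strategy p) (τ : G.CoStrategy p) : G.Profile :=
  fun q => if h : q = p then (by subst h; exact σ) else τ q h

/-- One-step transition probability when each player independently samples its move. -/
def stepProb (s : G.S) (β : G.P → G.A → ℝ) (s' : G.S) : ℝ :=
  ∑ m ∈ Finset.univ.filter (fun m : G.P → G.A => G.tr s m = s'), ∏ p, β p (m p)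

/-- Probability of the cylinder of a history under a profile. -/
def cylProb (σv : G.Profile) (l : List G.S) : ℝ :=
  ∏ i ∈ Finset.range (l.length - 1),
    G.stepProb (G.lastS (l.take (i + 1))) (fun p => (σv p (l.take (i + 1))).1)
      (G.lastS (l.take (i + 2)))

/-- The cylinder of a finite word: runs having it as a prefix. -/
def Cyl (l : List G.S) : Set G.Run := { ρ | ∀ i, i < l.length → ρ i = l.getD i G.init }

/-- Histories with positive probability under a profile. -/
def HistOf (σv : G.Profile) : Set (List G.S) :=
  { l | G.IsHistory l ∧ 0 < G.cylProb σv l }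

/-- The prefix of length `k+1` of a run. -/
def prefixList (ρ : G.Run) (k : ℕ) : List G.S := (List.range (k + 1)).map ρ

/-- Outcome of a profile: runs all of whose prefixes have positive probability. -/
def Outcome (σv : G.Profile) : Set G.Run := { ρ | ∀ k, G.prefixList ρ k ∈ G.HistOf σv }

/-- Histories compatible with a single strategy of player `p`. -/
def HistOfS {p : G.P} (σ : G.Strategy p) : Set (List G.S) :=
  ⋃ τ : G.CoStrategy p, G.HistOf (G.combine σ τ)

/-- `Pr` assigns to every profile a probability measure on runs which agrees with the
    inductively defined cylinder probabilities. -/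
def ValidPr (Pr : G.Profile → Measure G.Run) : Prop :=
  (∀ σv, IsProbabilityMeasure (Pr σv)) ∧
    ∀ σv l, G.IsHistory l → Pr σv (G.Cyl l) = ENNReal.ofReal (G.cylProb σv l)

/-- A profile wins a condition under the sure / almost-sure semantics. -/
def Wins (Pr : G.Profile → Measure G.Run) : Sem → G.Profile → Set G.Run → Prop
  | Sem.Sure, σv, Φ => G.Outcome σv ⊆ Φ
  | Sem.Almost, σv, Φ => Pr σv Φ = 1

/-- A profile wins a condition from a given history, under each semantics. -/
def WinsFrom (Pr : G.Profile → Measure G.Run) : Sem → G.Profile → Set G.Run → List G.S → Prop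
  | Sem.Sure, σv, Φ, l => G.Outcome σv ∩ G.Cyl l ⊆ Φ
  | Sem.Almost, σv, Φ, l => l ∈ G.HistOf σv ∧ Pr σv (Φ ∩ G.Cyl l) / Pr σv (G.Cyl l) = 1

/-- A strategy of `p` is winning if it wins against every coalition strategy. -/
def StratWins (Pr : G.Profile → Measure G.Run) (st : Sem) {p : G.P} (σ : G.Strategy p)
    (Φ : Set G.Run) : Prop :=
  ∀ τ : G.CoStrategy p, G.Wins Pr st (G.combine σ τ) Φ

/-- A strategy of `p` is winning from a history `l`. -/
def StratWinsFrom (Pr : G.Profile → Measure G.Run) (st : Sem) {p : G.P} (σ : G.Strategy p)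
    (Φ : Set G.Run) (l : List G.S) : Prop :=
  ∀ τ : G.CoStrategy p, G.WinsFrom Pr st (G.combine σ τ) Φ l

/-- Weak dominance between strategies of player `p`. -/
def WDom (Pr : G.Profile → Measure G.Run) (win : G.P → Set G.Run) (st : Sem) {p : G.P}
    (σ σ' : G.Strategy p) : Prop :=
  ∀ τ : G.CoStrategy p,
    G.Wins Pr st (G.combine σ τ) (win p) → G.Wins Pr st (G.combine σ' τ) (win p)

/-- Strict dominance between strategies. -/
def SDom (Pr : G.Profile → Measure G.Run) (win : G.P → Set G.Run) (st : Sem) {p : G.P}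
    (σ σ' : G.Strategy p) : Prop :=
  G.WDom Pr win st σ σ' ∧ ¬ G.WDom Pr win st σ' σ

/-- Equivalence of strategies. -/
def EquivS (Pr : G.Profile → Measure G.Run) (win : G.P → Set G.Run) (st : Sem) {p : G.P}
    (σ σ' : G.Strategy p) : Prop :=
  G.WDom Pr win st σ σ' ∧ G.WDom Pr win st σ' σ

/-- A strategy is admissible iff it is not dominated. -/
def Admissible (Pr : G.Profile → Measure G.Run) (win : G.P → Set G.Run) (st : Sem) {p : G.P}
    (σ : G.Strategy p) : Prop :=
  ∀ σ' : G.Strategy p, ¬ G.SDom Pr win st σ σ'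

/-- Weak dominance between randomised moves at a history. -/
def MWDom (Pr : G.Profile → Measure G.Run) (win : G.P → Set G.Run) (st : Sem) {p : G.P}
    (l : List G.S) (α α' : G.Mixed p (G.lastS l)) : Prop :=
  ∀ σ : G.Strategy p, l ∈ G.HistOfS σ → σ l = α →
    ∃ σ' : G.Strategy p, σ' l = α' ∧ G.WDom Pr win st σ σ'

/-- Equivalence of moves at a history. -/
def MEquiv (Pr : G.Profile → Measure G.Run) (win : G.P → Set G.Run) (st : Sem) {p : G.P}
    (l : List G.S) (α α' : G.Mixed p (G.lastS l)) : Prop :=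
  G.MWDom Pr win st l α α' ∧ G.MWDom Pr win st l α' α

/-- Strict dominance between moves at a history. -/
def MSDom (Pr : G.Profile → Measure G.Run) (win : G.P → Set G.Run) (st : Sem) {p : G.P}
    (l : List G.S) (α α' : G.Mixed p (G.lastS l)) : Prop :=
  G.MWDom Pr win st l α α' ∧ ¬ G.MWDom Pr win st l α' α

/-- A move is admissible at a history iff no move dominates it there. -/
def MAdmissible (Pr : G.Profile → Measure G.Run) (win : G.P → Set G.Run) (st : Sem) {p : G.P}
    (l : List G.S) (α : G.Mixed p (G.lastS l)) : Prop :=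
  ∀ α' : G.Mixed p (G.lastS l), ¬ G.MSDom Pr win st l α α'

/-- A strategy is locally admissible (LA) iff it plays admissible moves at every history. -/
def LA (Pr : G.Profile → Measure G.Run) (win : G.P → Set G.Run) (st : Sem) {p : G.P}
    (σ : G.Strategy p) : Prop :=
  ∀ l, G.IsHistory l → G.MAdmissible Pr win st l (σ l)

/-- The value of a history w.r.t. a strategy: 1 if winning from it, 0 if the coalition can
    both let the strategy win and make it lose, -1 otherwise. -/
def ValStrat (Pr : G.Profile → Measure G.Run) (win : G.P → Set G.Run) (st : Sem) {p : G.P}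
    (l : List G.S) (σ : G.Strategy p) : ℤ :=
  if G.StratWinsFrom Pr st σ (win p) l then 1
  else if (∃ τ : G.CoStrategy p, G.WinsFrom Pr st (G.combine σ τ) (win p) l) then 0
  else -1

/-- The value of a history for player `p`: the best value over the player's strategies. -/
def ValH (Pr : G.Profile → Measure G.Run) (win : G.P → Set G.Run) (st : Sem) (p : G.P)
    (l : List G.S) : ℤ :=
  if (∃ σ : G.Strategy p, G.ValStrat Pr win st l σ = 1) then 1
  else if (∃ σ : G.Strategy p, G.ValStrat Pr win st l σ = 0) then 0
  else -1

/-- Strongly cooperative optimal strategies. -/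
def SCO (Pr : G.Profile → Measure G.Run) (win : G.P → Set G.Run) (st : Sem) {p : G.P}
    (σ : G.Strategy p) : Prop :=
  ∀ l ∈ G.HistOfS σ, G.ValStrat Pr win st l σ = G.ValH Pr win st p l

/-- The full action tuple obtained from `a` for `p` and `c` for the coalition. -/
def combAct {p : G.P} (a : G.A) (c : ∀ q : G.P, q ≠ p → G.A) : G.P → G.A :=
  fun q => if h : q = p then (by subst h; exact a) else c q h

/-- The tuple of one-step distributions obtained from a move of `p` and coalition moves. -/
def combMix {p : G.P} {s : G.S} (α : G.Mixed p s) (γ : ∀ q : G.P, q ≠ p → G.Mixed q s) :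
    G.P → G.A → ℝ :=
  fun q => if h : q = p then (by subst h; exact α.1) else (γ q h).1

/-- Simple safety games: each player loses exactly the runs visiting its bad states, and
    bad states are closed under steps. -/
def SimpleSafety (win : G.P → Set G.Run) : Prop :=
  ∃ Bad : G.P → Set G.S,
    (∀ p, win p = { ρ : G.Run | ∀ i, ρ i ∉ Bad p }) ∧
    ∀ p s, s ∈ Bad p → ∀ s', G.Step s s' → s' ∈ Bad p

/-- Prefix-independent winning conditions. -/
def PrefIndep (Φ : Set G.Run) : Prop :=
  ∀ (ρ : G.Run) (k : ℕ), ρ ∈ Φ ↔ (fun i => ρ (i + k)) ∈ Φ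

/-- `stf` and `plf` give the unique state and player where each action is available. -/
def UniqueAvail (stf : G.A → G.S) (plf : G.A → G.P) : Prop :=
  ∀ (q : G.P) (s : G.S) (a : G.A), a ∈ G.act q s → plf a = q ∧ stf a = s

/-- An action of player `q` is ⋆-LA if its Dirac move is admissible at every history where
    it is available. -/
def LAAct (Pr : G.Profile → Measure G.Run) (win : G.P → Set G.Run) (st : Sem)
    (q : G.P) (a : G.A) : Prop :=
  ∀ (l : List G.S) (_ : G.IsHistory l) (ha : a ∈ G.act q (G.lastS l)),
    G.MAdmissible Pr win st l (G.dirac q (G.lastS l) a ha)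

/-- Current `S`-component of a history of the derived game. -/
def dCur (l : List (G.S × (G.P → G.A))) : G.S := (l.getLast?.map Prod.fst).getD G.init

/-- Legal joint action in the derived game: available and ⋆-LA for every player. -/
def DLegal (Pr : G.Profile → Measure G.Run) (win : G.P → Set G.Run) (st : Sem)
    (s : G.S) (m : G.P → G.A) : Prop :=
  ∀ q, m q ∈ G.act q s ∧ G.LAAct Pr win st q (m q)

/-- Histories of the derived game `G⋆_p` (the part after the initial state). -/
def IsDHistory (Pr : G.Profile → Measure G.Run) (win : G.P → Set G.Run) (st : Sem)
    (l : List (G.S × (G.P → G.A))) : Prop :=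
  ∀ i (hi : i < l.length),
    G.DLegal Pr win st (G.dCur (l.take i)) (l.get ⟨i, hi⟩).2 ∧
    (l.get ⟨i, hi⟩).1 = G.tr (G.dCur (l.take i)) (l.get ⟨i, hi⟩).2

/-- Observation of a derived history: the projection to states. -/
def oHist (l : List (G.S × (G.P → G.A))) : List G.S := G.init :: l.map Prod.fst

/-- Observation-based Dirac strategies of player `p` in the derived game. -/
def IsDStrategy (Pr : G.Profile → Measure G.Run) (win : G.P → Set G.Run) (st : Sem)
    (p : G.P) (σb : List (G.S × (G.P → G.A)) → G.A) : Prop :=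
  (∀ l, G.IsDHistory Pr win st l → σb l ∈ G.act p (G.dCur l) ∧ G.LAAct Pr win st p (σb l)) ∧
  (∀ l l', G.oHist l = G.oHist l' → σb l = σb l')

/-- `σb` is a realisation of the strategy `σ` in the derived game. -/
def IsRealisation (Pr : G.Profile → Measure G.Run) (win : G.P → Set G.Run) (st : Sem)
    (p : G.P) (σ : G.Strategy p) (σb : List (G.S × (G.P → G.A)) → G.A) : Prop :=
  G.IsDStrategy Pr win st p σb ∧
  ∀ l, G.IsDHistory Pr win st l → σb l ∈ G.Supp (σ (G.oHist l))

/-- The prefix of length `k` of a derived run. -/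
def dPrefix (ρb : ℕ → G.S × (G.P → G.A)) (k : ℕ) : List (G.S × (G.P → G.A)) :=
  (List.range k).map ρb

/-- Outcome of a player-`p` strategy in the derived game: all derived runs consistent with
    it in which all players play legal ⋆-LA Dirac actions. -/
def DOutcome (Pr : G.Profile → Measure G.Run) (win : G.P → Set G.Run) (st : Sem)
    (p : G.P) (σb : List (G.S × (G.P → G.A)) → G.A) : Set (ℕ → G.S × (G.P → G.A)) :=
  { ρb | ∀ k,
      G.DLegal Pr win st (G.dCur (G.dPrefix ρb k)) (ρb k).2 ∧
      (ρb k).2 p = σb (G.dPrefix ρb k) ∧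
      (ρb k).1 = G.tr (G.dCur (G.dPrefix ρb k)) (ρb k).2 }

/-- Observation of a derived run: the induced run of `G`. -/
def oRun (ρb : ℕ → G.S × (G.P → G.A)) : G.Run :=
  fun k => match k with
  | 0 => G.init
  | Nat.succ n => (ρb n).1

/-- Value of a state for player `q` (well defined for prefix-independent conditions). -/
def ValSt (Pr : G.Profile → Measure G.Run) (win : G.P → Set G.Run) (st : Sem)
    (q : G.P) (s : G.S) : ℤ :=
  if (∃ l, G.IsHistory l ∧ G.lastS l = s ∧ G.ValH Pr win st q l = 1) then 1
  else if (∃ l, G.IsHistory l ∧ G.lastS l = s ∧ G.ValH Pr win st q l = 0) then 0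
  else -1

/-- States of the derived game where player `q` has value 0 but another choice of the
    coalition could have helped `q`. -/
def Help (Pr : G.Profile → Measure G.Run) (win : G.P → Set G.Run) (st : Sem)
    (stf : G.A → G.S) (q : G.P) : Set (G.S × (G.P → G.A)) :=
  { x | G.ValSt Pr win st q x.1 = 0 ∧
      ∃ c : ∀ r : G.P, r ≠ q → G.A, (∀ r hr, c r hr ∈ G.act r (stf (x.2 q))) ∧
        0 ≤ G.ValSt Pr win st q (G.tr (stf (x.2 q)) (G.combAct (x.2 q) c)) ∧
        G.tr (stf (x.2 q)) (G.combAct (x.2 q) c) ≠ x.1 }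

/-- The formula φ⁰_q evaluated on a derived run. -/
def phi0 (Pr : G.Profile → Measure G.Run) (win : G.P → Set G.Run) (st : Sem)
    (stf : G.A → G.S) (q : G.P) (ρb : ℕ → G.S × (G.P → G.A)) : Prop :=
  (∃ k, G.ValSt Pr win st q (G.oRun ρb k) ≠ 0) ∨
  (G.oRun ρb ∈ win q) ∨
  (∀ k, ∃ j, k ≤ j ∧ ρb j ∈ G.Help Pr win st stf q)

/-- The formula φ¹_q evaluated on a derived run. -/
def phi1 (Pr : G.Profile → Measure G.Run) (win : G.P → Set G.Run) (st : Sem)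
    (q : G.P) (ρb : ℕ → G.S × (G.P → G.A)) : Prop :=
  (∃ k, G.ValSt Pr win st q (G.oRun ρb k) = 1) → G.oRun ρb ∈ win q

/-- ω-regular sets of runs: recognised by a deterministic finite parity automaton. -/
def IsOmegaRegular (Φ : Set G.Run) : Prop :=
  ∃ (Q : Type) (_ : Fintype Q) (q0 : Q) (d : Q → G.S → Q) (c : Q → ℕ),
    Φ = { ρ : G.Run | ∃ n, Even n ∧
      Set.Infinite { k | c (autRun q0 d ρ k) = n } ∧
      ∀ m, Set.Infinite { k | c (autRun q0 d ρ k) = m } → n ≤ m }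

/-- Finite-memory strategies: realised by a finite stochastic Moore machine. -/
def FiniteMemory {p : G.P} (σ : G.Strategy p) : Prop :=
  ∃ (M : Type) (_ : Fintype M) (m0 : M) (upd : M → G.S → M)
    (out : M → (s : G.S) → G.Mixed p s),
    ∀ l : List G.S, σ l = out (l.foldl upd m0) (G.lastS l)

end ConcGame

/-- every S-admissible strategy is equivalent to a Dirac strategy. -/
theorem stmt15 (G : ConcGame) (win : G.P → Set G.Run)
    (hwin : ∀ p, MeasurableSet (win p))
    (Pr : G.Profile → Measure G.Run) (hPr : G.ValidPr Pr)
    (p : G.P) (σ : G.Strategy p)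
    (hadm : G.Admissible Pr win ConcGame.Sem.Sure σ) :
    ∃ σ' : G.Strategy p, G.EquivS Pr win ConcGame.Sem.Sure σ σ' ∧
      ∀ l, G.IsHistory l → G.IsDirac (σ' l) := by
  classical
  have hchoice : ∀ l : List G.S, ∃ b, (σ l).1 b ≠ 0 := by
    intro l
    by_contra h
    push_neg at h
    have hsum := (σ l).2.2.1
    simp [h] at hsum
  choose a ha using hchoice
  have hact : ∀ l, a l ∈ G.act p (G.lastS l) := fun l => (σ l).2.2.2 _ (ha l)
  set σ' : G.Strategy p := fun l => G.dirac p (G.lastS l) (a l) (hact l) with hσ'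
  have hsupp : ∀ l b, (σ' l).1 b ≠ 0 → (σ l).1 b ≠ 0 := by
    intro l b hb
    simp only [hσ', ConcGame.dirac] at hb
    by_cases hb2 : b = a l
    · subst hb2; exact ha l
    · simp [hb2] at hb
  have hcombp : ∀ (τ : G.CoStrategy p) (σ₀ : G.Strategy p), G.combine σ₀ τ p = σ₀ := by
    intro τ σ₀; simp [ConcGame.combine]
  have hcombq : ∀ (τ : G.CoStrategy p) (σ₀ : G.Strategy p) (q : G.P) (h : q ≠ p),
      G.combine σ₀ τ q = τ q h := by
    intro τ σ₀ q h; simp [ConcGame.combine, h]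
  -- nonnegativity of stepProb
  have hstepnn : ∀ (s s' : G.S) (β : ∀ q : G.P, G.Mixed q s),
      0 ≤ G.stepProb s (fun q => (β q).1) s' := by
    intro s s' β
    apply Finset.sum_nonneg
    intro m _
    exact Finset.prod_nonneg fun q _ => (β q).2.1 _
  -- step positivity transfer
  have hstep : ∀ (s s' : G.S) (β β' : ∀ q : G.P, G.Mixed q s),
      (∀ q x, (β' q).1 x ≠ 0 → (β q).1 x ≠ 0) →
      0 < G.stepProb s (fun q => (β' q).1) s' → 0 < G.stepProb s (fun q => (β q).1) s' := by
    intro s s' β β' hsub hpos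
    unfold ConcGame.stepProb at hpos ⊢
    obtain ⟨m, hm, hmpos⟩ : ∃ m ∈ Finset.univ.filter (fun m : G.P → G.A => G.tr s m = s'),
        0 < ∏ q, (β' q).1 (m q) := by
      by_contra hc
      push_neg at hc
      have : (∑ m ∈ Finset.univ.filter (fun m : G.P → G.A => G.tr s m = s'),
          ∏ q, (β' q).1 (m q)) ≤ 0 := Finset.sum_nonpos fun m hm => hc m hm
      linarith
    have hne : ∀ q : G.P, (β' q).1 (m q) ≠ 0 := by
      intro q
      have := hmpos.ne'
      rw [Finset.prod_ne_zero_iff] at this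
      exact this q (Finset.mem_univ q)
    have hterm : 0 < ∏ q, (β q).1 (m q) := by
      apply Finset.prod_pos
      intro q _
      exact lt_of_le_of_ne ((β q).2.1 _) (Ne.symm (hsub q (m q) (hne q)))
    calc (0:ℝ) < ∏ q, (β q).1 (m q) := hterm
      _ ≤ ∑ m ∈ Finset.univ.filter (fun m : G.P → G.A => G.tr s m = s'),
          ∏ q, (β q).1 (m q) :=
        Finset.single_le_sum (f := fun m : G.P → G.A => ∏ q, (β q).1 (m q))
          (fun m _ => Finset.prod_nonneg fun q _ => (β q).2.1 _) hm
  -- cylinder positivity transfer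
  have hcyl : ∀ (τ : G.CoStrategy p) (l : List G.S),
      0 < G.cylProb (G.combine σ' τ) l → 0 < G.cylProb (G.combine σ τ) l := by
    intro τ l hpos
    unfold ConcGame.cylProb at hpos ⊢
    apply Finset.prod_pos
    intro i hi
    have hfac : 0 < G.stepProb (G.lastS (l.take (i + 1)))
        (fun q => (G.combine σ' τ q (l.take (i + 1))).1) (G.lastS (l.take (i + 2))) := by
      have hne : ∀ j ∈ Finset.range (l.length - 1),
          (0:ℝ) ≤ G.stepProb (G.lastS (l.take (j + 1)))
            (fun q => (G.combine σ' τ q (l.take (j + 1))).1) (G.lastS (l.take (j + 2))) :=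
        fun j _ => hstepnn _ _ _
      have := hpos.ne'
      rw [Finset.prod_ne_zero_iff] at this
      exact lt_of_le_of_ne (hne i hi) (Ne.symm (this i hi))
    refine hstep _ _ (fun q => G.combine σ τ q (l.take (i+1)))
      (fun q => G.combine σ' τ q (l.take (i+1))) ?_ hfac
    intro q x hx
    by_cases hq : q = p
    · subst hq
      rw [hcombp] at hx ⊢
      exact hsupp _ _ hx
    · rw [hcombq τ σ' q hq] at hx
      rw [hcombq τ σ q hq]
      exact hx
  have hw : G.WDom Pr win ConcGame.Sem.Sure σ σ' := by
    intro τ hwσ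
    intro ρ hρ
    apply hwσ
    intro k
    obtain ⟨hH, hP⟩ := hρ k
    exact ⟨hH, hcyl τ _ hP⟩
  have hw' : G.WDom Pr win ConcGame.Sem.Sure σ' σ := by
    by_contra hc
    exact hadm σ' ⟨hw, hc⟩
  refine ⟨σ', ⟨hw, hw'⟩, ?_⟩
  intro l _
  exact ⟨a l, by simp [hσ', ConcGame.dirac]⟩
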